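/- Let ℐ ⊆ ℕ be finite and nonempty, let τ ∈ ∏_{i∈ℐ}[2^i], and let A = [τ] = {f ∈ 𝒯 : ∀ i ∈ ℐ, f(i) = τ(i)}. Then every (ℐ, τ, N)-rectangle covers A, i.e. A is contained in the union of its members. -/

import Mathlib

noncomputable section

/-- 𝒯 = ∏_{n∈ℕ} [2^n]  (the paper's index `n ∈ {1,2,…}` is the Lean index `n+1`). -/
abbrev Tal : Type := (n : ℕ) → Fin (2 ^ (n + 1))

/-- `S_{n,τ} = {f ∈ 𝒯 : f(n) ≠ τ}`. -/
def Sset (n : ℕ) (τ : Fin (2 ^ (n + 1))) : Set Tal := {f | f n ≠ τ}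

/-- The 𝒟-set `⋂_{n ∈ I} S_{n, t n}` with (nonempty, finite) index set `I`;
only the values of `t` on `I` matter. -/
def DSet (I : Finset ℕ) (t : (n : ℕ) → Fin (2 ^ (n + 1))) : Set Tal :=
  {f | ∀ n ∈ I, f n ≠ t n}

/-- `η(k) = 2^{2500 k⁴}`. -/
def ηT (k : ℕ) : ℕ := 2 ^ (2500 * k ^ 4)

/-- `α(k) = (k+5)^{-3}`. -/
def αT (k : ℕ) : ℝ := (((k : ℝ) + 5) ^ 3)⁻¹

/-- `δ(m) = min {n ∈ ℕ : η(n) ≥ m}` (with `ℕ = {1,2,…}`). -/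
def δT (m : ℕ) : ℕ := sInf {n : ℕ | 1 ≤ n ∧ m ≤ ηT n}

/-- `w(n) = 2^{-δ(n)} (η(δ(n))/n)^{α(δ(n))}`. -/
def wT (n : ℕ) : ℝ :=
  (2 : ℝ) ^ (-(δT n : ℤ)) * ((ηT (δT n) : ℝ) / (n : ℝ)) ^ (αT (δT n))

/-- Membership in Talagrand's family 𝒟 for a triple `(X, I, w)`:  for some `k ∈ {1,2,…}`,
`X` is a 𝒟-set with index set `I`, `1 ≤ |I| ≤ η(k)`, and `w = 2^{-k}(η(k)/|I|)^{α(k)}`. -/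
def memD (p : Set Tal × Finset ℕ × ℝ) : Prop :=
  ∃ k : ℕ, 1 ≤ k ∧ (∃ t : (n : ℕ) → Fin (2 ^ (n + 1)), p.1 = DSet p.2.1 t) ∧
    p.2.1.Nonempty ∧ p.2.1.card ≤ ηT k ∧
    p.2.2 = (2 : ℝ) ^ (-(k : ℤ)) * ((ηT k : ℝ) / (p.2.1.card : ℝ)) ^ (αT k)

/-- Talagrand's first pathological submeasure:
`ψ(B) = inf { w(Y) : Y ⊆ 𝒟 finite, B ⊆ ⋃ Y }`. -/
def ψT (B : Set Tal) : ℝ :=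
  sInf {r : ℝ | ∃ Y : Finset (Set Tal × Finset ℕ × ℝ), (∀ p ∈ Y, memD p) ∧
    B ⊆ (⋃ p ∈ Y, p.1) ∧ r = ∑ p ∈ Y, p.2.2}

end

/-- Every `(ℐ, τ, N)`-rectangle covers `A = [τ]`:  a family of 𝒟-sets
`X i = DSet (Ind i) (t i)` (for `i < N`) with `ℐ ⊊ Ind i`, whose derived family
`⋂_{l ∈ Ind i ∖ ℐ} S_{l, tᵢ(l)}` is an `N`-rectangle, and whose defining values avoid `τ`
on `ℐ`, covers `{f ∈ 𝒯 : ∀ i ∈ ℐ, f i = τ i}`. -/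
theorem statement10 (ℐ : Finset ℕ) (hℐ : ℐ.Nonempty)
    (τ : (n : ℕ) → Fin (2 ^ (n + 1)))
    (N : ℕ) (hN : 2 ≤ N)
    (Ind : Fin N → Finset ℕ) (t : Fin N → (n : ℕ) → Fin (2 ^ (n + 1)))
    (hsub : ∀ i, ℐ ⊂ Ind i)
    (hcommon : ∀ i j, Ind i \ ℐ = Ind j \ ℐ)
    (hcard : ∀ i, (Ind i \ ℐ).card = N - 1)
    (hdiff : ∀ i j : Fin N, i ≠ j → ∀ m ∈ Ind i \ ℐ, t i m ≠ t j m)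
    (hdistinct : Function.Injective (fun i : Fin N => DSet (Ind i \ ℐ) (t i)))
    (havoid : ∀ i, ∀ j ∈ ℐ, t i j ≠ τ j) :
    {f : Tal | ∀ i ∈ ℐ, f i = τ i} ⊆ ⋃ i : Fin N, DSet (Ind i) (t i) := by
  classical
  intro f hf
  simp only [Set.mem_iUnion]
  have h2 : 0 < N := by omega
  set i0 : Fin N := ⟨0, h2⟩ with hi0
  set L : Finset ℕ := Ind i0 \ ℐ with hLdef
  set B : Finset (Fin N) := Finset.univ.filter (fun i => ∃ l ∈ L, f l = t i l) with hBdef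
  have hBcard : B.card ≤ L.card := by
    have : ∀ i ∈ B, ∃ l ∈ L, f l = t i l := by
      intro i hi
      exact (Finset.mem_filter.mp hi).2
    choose g hg1 hg2 using this
    refine Finset.card_le_card_of_injOn (fun i => if h : i ∈ B then g i h else 0) ?_ ?_
    · intro i hi; simp only [Finset.mem_coe] at hi ⊢; simp only [hi, dif_pos]; exact hg1 i hi
    · intro i hi j hj hij
      simp only [Finset.mem_coe] at hi hj
      simp only [hi, hj, dif_pos] at hij
      by_contra hne
      have hl : g i hi ∈ Ind i \ ℐ := by rw [hcommon i i0]; exact hg1 i hi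
      exact hdiff i j hne (g i hi) hl ((hg2 i hi).symm.trans (hij ▸ hg2 j hj))
  have hBne : B ≠ Finset.univ := by
    intro h
    have : N ≤ L.card := by
      calc N = (Finset.univ : Finset (Fin N)).card := by simp
        _ = B.card := by rw [h]
        _ ≤ L.card := hBcard
    rw [hcard i0] at this; omega
  obtain ⟨i, hi⟩ : ∃ i, i ∉ B := by
    by_contra h
    push_neg at h
    exact hBne (Finset.eq_univ_iff_forall.mpr h)
  refine ⟨i, fun n hn => ?_⟩
  by_cases hnI : n ∈ ℐ
  · intro heq
    exact havoid i n hnI (heq ▸ hf n hnI)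
  · have hnL : n ∈ L := by
      rw [hLdef, ← hcommon i i0]; exact Finset.mem_sdiff.mpr ⟨hn, hnI⟩
    intro heq
    exact hi (Finset.mem_filter.mpr ⟨Finset.mem_univ i, ⟨n, hnL, heq⟩⟩)
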